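/- Let G be a finite purely non-abelian group. Then for any m, t ∈ ℕ, any w ∈ Hom(G, Z(G)), any group homomorphisms f₁, …, f_m: Ẑ(G) → Z(G), and any bicharacters g₁, …, g_m: G → Ĝ, there is a unique z ∈ Hom(G, Z(G)) satisfying, for all x ∈ G, z(x) = w(x) · ∏_{s=1}^{t} ∏_{i=1}^{m} f_i( ζ_z^s( ρ(g_i(x)) ) ), where ζ_z: Ẑ(G) → Ẑ(G) is the endomorphism ζ_z(χ) = χ ∘ (z restricted to Z(G)) (i.e. ζ_z = ρ ∘ z*, the dual of z followed by restriction to the center) and ζ_z^s is its s-fold composite. -/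

import Mathlib

/-- A finite group `G` is purely non-abelian if it has no nontrivial abelian direct
factor: whenever `G` is the internal direct product of two normal subgroups `A` and `B`
with `A` abelian, `A` is trivial. -/
def PurelyNonAbelian (G : Type*) [Group G] : Prop :=
  ∀ A B : Subgroup G, A.Normal → B.Normal → IsCompl A B →
    (∀ a b : A, a * b = b * a) → A = ⊥

open scoped IsMulCommutative

namespace URecAux


section Duality

variable (A : Type*) [CommGroup A] [Finite A]

lemma neZero_exp : NeZero ((Monoid.exponent A : ℂ)) :=
  ⟨by exact_mod_cast Monoid.exponent_ne_zero_of_finite (G := A)⟩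

theorem char_sep {a b : A} (h : ∀ χ : A →* ℂˣ, χ a = χ b) : a = b := by
  haveI := neZero_exp A
  by_contra hne
  obtain ⟨χ, hχ⟩ := CommGroup.exists_apply_ne_one_of_hasEnoughRootsOfUnity A ℂ
    (a := a / b) (div_ne_one.mpr hne)
  apply hχ
  rw [map_div, h χ, div_self']

lemma finite_dual : Finite (A →* ℂˣ) := by
  haveI := neZero_exp A
  obtain ⟨e⟩ := CommGroup.monoidHom_mulEquiv_of_hasEnoughRootsOfUnity A ℂ
  exact Finite.of_equiv A e.symm.toEquiv

lemma card_dual : Nat.card (A →* ℂˣ) = Nat.card A := by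
  haveI := neZero_exp A
  obtain ⟨e⟩ := CommGroup.monoidHom_mulEquiv_of_hasEnoughRootsOfUnity A ℂ
  exact Nat.card_congr e.toEquiv

theorem ddual_surj (ψ : (A →* ℂˣ) →* ℂˣ) : ∃ a : A, ∀ χ : A →* ℂˣ, ψ χ = χ a := by
  haveI := finite_dual A
  haveI := finite_dual (A →* ℂˣ)
  let ev : A →* ((A →* ℂˣ) →* ℂˣ) :=
    { toFun := fun a =>
        { toFun := fun χ => χ a
          map_one' := rfl
          map_mul' := fun χ₁ χ₂ => rfl }
      map_one' := by ext χ; simp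
      map_mul' := fun a b => by ext χ; simp }
  have hinj : Function.Injective ev := by
    intro a b hab
    exact char_sep A fun χ => DFunLike.congr_fun hab χ
  have hcard : Nat.card A = Nat.card ((A →* ℂˣ) →* ℂˣ) := by
    rw [card_dual (A →* ℂˣ), card_dual A]
  have hbij : Function.Bijective ev :=
    (Nat.bijective_iff_injective_and_card ev).mpr ⟨hinj, hcard⟩
  obtain ⟨a, ha⟩ := hbij.2 ψ
  exact ⟨a, fun χ => by rw [← ha]; rfl⟩

variable {A}

noncomputable def veeFun (φ : (A →* ℂˣ) →* A) (χ : A →* ℂˣ) : A :=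
  (ddual_surj A (χ.comp φ)).choose

lemma veeFun_spec (φ : (A →* ℂˣ) →* A) (χ ξ : A →* ℂˣ) :
    χ (φ ξ) = ξ (veeFun φ χ) :=
  (ddual_surj A (χ.comp φ)).choose_spec ξ

noncomputable def vee (φ : (A →* ℂˣ) →* A) : (A →* ℂˣ) →* A :=
  MonoidHom.mk' (veeFun φ) (fun χ₁ χ₂ => char_sep A fun ξ => by
    calc ξ (veeFun φ (χ₁ * χ₂)) = (χ₁ * χ₂) (φ ξ) := (veeFun_spec φ _ ξ).symm
      _ = χ₁ (φ ξ) * χ₂ (φ ξ) := rfl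
      _ = ξ (veeFun φ χ₁) * ξ (veeFun φ χ₂) := by
          rw [veeFun_spec φ χ₁ ξ, veeFun_spec φ χ₂ ξ]
      _ = ξ (veeFun φ χ₁ * veeFun φ χ₂) := (map_mul ξ _ _).symm)

lemma vee_spec (φ : (A →* ℂˣ) →* A) (χ ξ : A →* ℂˣ) :
    χ (φ ξ) = ξ (vee φ χ) :=
  veeFun_spec φ χ ξ

end Duality


section Words

variable {G : Type*} [Group G] [Finite G]

/-- restriction of `z : G →* Z(G)` to the center -/
def ee (z : G →* ↥(Subgroup.center G)) :
    ↥(Subgroup.center G) →* ↥(Subgroup.center G) :=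
  z.comp (Subgroup.center G).subtype

/-- composite of a word of restrictions, first letter applied first -/
def wcomp : List (G →* ↥(Subgroup.center G)) →
    (↥(Subgroup.center G) →* ↥(Subgroup.center G))
  | [] => MonoidHom.id _
  | z :: L => (wcomp L).comp (ee z)

lemma wcomp_nil : wcomp ([] : List (G →* ↥(Subgroup.center G))) = MonoidHom.id _ := rfl

lemma wcomp_cons (z : G →* ↥(Subgroup.center G)) (L) :
    wcomp (z :: L) = (wcomp L).comp (ee z) := rfl

lemma wcomp_append (L₁ L₂ : List (G →* ↥(Subgroup.center G))) :
    wcomp (L₁ ++ L₂) = (wcomp L₂).comp (wcomp L₁) := by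
  induction L₁ with
  | nil => simp [wcomp_nil]
  | cons z L ih => simp [wcomp_cons, ih, MonoidHom.comp_assoc]

lemma exists_wcomp_eq_ee (L : List (G →* ↥(Subgroup.center G))) (h : L ≠ []) :
    ∃ u, wcomp L = ee u := by
  induction L with
  | nil => exact absurd rfl h
  | cons z L ih =>
    rcases eq_or_ne L [] with rfl | hL
    · exact ⟨z, by rw [wcomp_cons, wcomp_nil, MonoidHom.id_comp]⟩
    · obtain ⟨u, hu⟩ := ih hL
      refine ⟨(u.comp (Subgroup.center G).subtype).comp z, ?_⟩
      rw [wcomp_cons, hu]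
      rfl

lemma wcomp_replicate_succ (z : G →* ↥(Subgroup.center G)) (n : ℕ) :
    wcomp (List.replicate (n+1) z) = (wcomp (List.replicate n z)).comp (ee z) := rfl

lemma wcomp_replicate_succ' (z : G →* ↥(Subgroup.center G)) (n : ℕ) :
    wcomp (List.replicate (n+1) z) = (ee z).comp (wcomp (List.replicate n z)) := by
  induction n with
  | zero => rfl
  | succ n ih =>
    calc wcomp (List.replicate (n+2) z)
        = (wcomp (List.replicate (n+1) z)).comp (ee z) := rfl
      _ = ((ee z).comp (wcomp (List.replicate n z))).comp (ee z) := by rw [ih]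
      _ = (ee z).comp ((wcomp (List.replicate n z)).comp (ee z)) :=
          MonoidHom.comp_assoc _ _ _
      _ = (ee z).comp (wcomp (List.replicate (n+1) z)) := rfl

theorem ee_nilpotent (hG : PurelyNonAbelian G) (z : G →* ↥(Subgroup.center G)) :
    ∃ n, wcomp (List.replicate n z) = 1 := by
  classical
  set S : ℕ → Subgroup ↥(Subgroup.center G) :=
    fun n => (wcomp (List.replicate n z)).range with hS
  have hadd : ∀ k n : ℕ, wcomp (List.replicate (k + n) z)
      = (wcomp (List.replicate n z)).comp (wcomp (List.replicate k z)) := by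
    intro k n
    rw [← wcomp_append, ← List.replicate_add]
  have Sle : ∀ k n : ℕ, S (k + n) ≤ S n := by
    intro k n
    rw [hS]
    dsimp only
    rw [hadd k n, MonoidHom.range_comp]
    exact Subgroup.map_le_range _ _
  -- minimal cardinality
  obtain ⟨n, hn⟩ : ∃ n, Nat.card (S n) = sInf (Set.range fun n => Nat.card (S n)) := by
    have := Nat.sInf_mem (s := Set.range fun n => Nat.card (S n)) ⟨_, ⟨0, rfl⟩⟩
    obtain ⟨n, hn⟩ := this
    exact ⟨n, hn⟩
  have hconst : ∀ k : ℕ, S (k + n) = S n := by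
    intro k
    refine Subgroup.eq_of_le_of_card_ge (Sle k n) ?_
    rw [hn]
    exact Nat.sInf_le ⟨k + n, rfl⟩
  set c1 := wcomp (List.replicate (n+1) z) with hc1
  have hA0map : Subgroup.map c1 (S n) = S n := by
    have : Subgroup.map c1 (S n) = S (n + (n+1)) := by
      rw [hS]
      dsimp only
      rw [← MonoidHom.range_comp, ← hadd n (n+1)]
    rw [this, Nat.add_comm n (n+1), hconst (n+1)]
  -- the induced self-map of S n
  have hc1mem : ∀ a : ↥(S n), c1 (a : ↥(Subgroup.center G)) ∈ S n := by
    intro a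
    have h := Subgroup.mem_map_of_mem c1 a.2
    rwa [hA0map] at h
  set e1 : ↥(S n) → ↥(S n) := fun a => ⟨c1 a, hc1mem a⟩ with he1
  have hsurj : Function.Surjective e1 := by
    intro b
    have hb : (b : ↥(Subgroup.center G)) ∈ Subgroup.map c1 (S n) := by
      rw [hA0map]; exact b.2
    obtain ⟨a, ha, hab⟩ := hb
    exact ⟨⟨a, ha⟩, Subtype.ext hab⟩
  have hinj : Function.Injective e1 := Finite.injective_iff_surjective.mpr hsurj
  -- subgroups of G
  set ι := (Subgroup.center G).subtype with hι
  set AG : Subgroup G := Subgroup.map ι (S n) with hAG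
  set ψ : G →* ↥(Subgroup.center G) := (wcomp (List.replicate n z)).comp z with hψ
  have hψmem : ∀ x, ψ x ∈ S n := fun x => ⟨z x, rfl⟩
  set θ : G →* ↥(S n) := ψ.codRestrict (S n) hψmem with hθ
  have hθι : ∀ a : ↥(S n), (θ (ι (a : ↥(Subgroup.center G))) : ↥(Subgroup.center G))
      = c1 (a : ↥(Subgroup.center G)) := by
    intro a
    rfl
  have hAGle : AG ≤ Subgroup.center G := Subgroup.map_subtype_le _
  have hnAG : AG.Normal := by
    constructor
    intro x hx g
    have hxc := Subgroup.mem_center_iff.mp (hAGle hx)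
    rw [hxc g, mul_assoc, mul_inv_cancel, mul_one]
    exact hx
  have hnB : (θ.ker).Normal := MonoidHom.normal_ker θ
  have hdisj : Disjoint AG θ.ker := by
    rw [Subgroup.disjoint_def]
    rintro x hxA hxB
    obtain ⟨a, ha, rfl⟩ := hxA
    have h1 : θ (ι a) = 1 := hxB
    have h2 : e1 ⟨a, ha⟩ = e1 ⟨1, (S n).one_mem⟩ := by
      apply Subtype.ext
      have := congrArg (Subtype.val) h1
      rw [hθι ⟨a, ha⟩] at this
      simpa [he1] using this
    have := hinj h2
    have ha1 : a = 1 := by simpa using congrArg Subtype.val this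
    rw [ha1, map_one]
  have hcodis : Codisjoint AG θ.ker := by
    rw [codisjoint_iff_le_sup]
    intro g _
    obtain ⟨a0, ha0⟩ := hsurj (θ g)
    have hval : c1 (a0 : ↥(Subgroup.center G)) = ψ g := by
      have := congrArg Subtype.val ha0
      exact this
    have hxA : ι (a0 : ↥(Subgroup.center G)) ∈ AG :=
      Subgroup.mem_map_of_mem _ a0.2
    have hbB : (ι (a0 : ↥(Subgroup.center G)))⁻¹ * g ∈ θ.ker := by
      rw [MonoidHom.mem_ker, map_mul, map_inv]
      apply Subtype.ext
      push_cast
      rw [hθι a0, hval]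
      exact inv_mul_cancel _
    have : g = ι (a0 : ↥(Subgroup.center G)) * ((ι (a0 : ↥(Subgroup.center G)))⁻¹ * g) := by
      rw [mul_inv_cancel_left]
    rw [this]
    exact Subgroup.mul_mem_sup hxA hbB
  have hcomm : ∀ a b : ↥AG, a * b = b * a := by
    intro a b
    apply Subtype.ext
    push_cast
    exact (Subgroup.mem_center_iff.mp (hAGle a.2) b).symm
  have hbot : AG = ⊥ := hG AG θ.ker hnAG hnB ⟨hdisj, hcodis⟩ hcomm
  have hSbot : S n = ⊥ := by
    rw [eq_bot_iff]
    intro a ha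
    have : ι a ∈ AG := Subgroup.mem_map_of_mem _ ha
    rw [hbot, Subgroup.mem_bot] at this
    have ha1 : a = 1 := by
      apply Subtype.ext
      simpa [hι] using this
    simp [ha1, Subgroup.mem_bot]
  refine ⟨n, ?_⟩
  ext y
  have : wcomp (List.replicate n z) y ∈ S n := ⟨y, rfl⟩
  rw [hSbot, Subgroup.mem_bot] at this
  simp [this]

theorem long_words_trivial (hG : PurelyNonAbelian G) (L : List (G →* ↥(Subgroup.center G)))
    (hL : Nat.card (↥(Subgroup.center G) →* ↥(Subgroup.center G)) + 1 ≤ L.length) :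
    wcomp L = 1 := by
  classical
  haveI : Finite (↥(Subgroup.center G) →* ↥(Subgroup.center G)) :=
    Finite.of_injective _ DFunLike.coe_injective
  haveI := Fintype.ofFinite (↥(Subgroup.center G) →* ↥(Subgroup.center G))
  set N := Nat.card (↥(Subgroup.center G) →* ↥(Subgroup.center G)) with hN
  suffices H : ∀ j j' : ℕ, j < j' → j' ≤ L.length →
      wcomp (L.take j) = wcomp (L.take j') → wcomp L = 1 by
    obtain ⟨j, j', hne, heq⟩ := Fintype.exists_ne_map_eq_of_card_lt
      (fun j : Fin (N + 2) => wcomp (L.take j)) (by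
        rw [Fintype.card_fin, ← Nat.card_eq_fintype_card, ← hN]
        omega)
    have hj : (j : ℕ) ≤ L.length := by
      have := j.is_le
      omega
    have hj' : (j' : ℕ) ≤ L.length := by
      have := j'.is_le
      omega
    rcases lt_or_gt_of_ne (fun h => hne (Fin.ext h) : (j : ℕ) ≠ (j' : ℕ)) with h | h
    · exact H j j' h hj' heq
    · exact H j' j h hj heq.symm
  intro j j' hjj' hj'len heq
  set M := (L.take j').drop j with hM
  have hsplit : L.take j' = L.take j ++ M := by
    conv_lhs => rw [← List.take_append_drop j (L.take j')]
    rw [List.take_take, min_eq_left hjj'.le, hM]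
  have hMlen : 0 < M.length := by
    rw [hM, List.length_drop, List.length_take, min_eq_left hj'len]
    omega
  obtain ⟨u, hu⟩ := exists_wcomp_eq_ee M (List.ne_nil_of_length_pos hMlen)
  have hfix : wcomp (L.take j) = (ee u).comp (wcomp (L.take j)) := by
    conv_lhs => rw [heq, hsplit, wcomp_append, hu]
  have hiter : ∀ r, wcomp (L.take j)
      = (wcomp (List.replicate r u)).comp (wcomp (L.take j)) := by
    intro r
    induction r with
    | zero => rw [List.replicate_zero, wcomp_nil, MonoidHom.id_comp]
    | succ r ih =>
      rw [wcomp_replicate_succ']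
      calc wcomp (L.take j) = (ee u).comp (wcomp (L.take j)) := hfix
        _ = (ee u).comp ((wcomp (List.replicate r u)).comp (wcomp (L.take j))) := by
            rw [← ih]
        _ = ((ee u).comp (wcomp (List.replicate r u))).comp (wcomp (L.take j)) :=
            (MonoidHom.comp_assoc _ _ _).symm
  obtain ⟨n, hn⟩ := ee_nilpotent hG u
  have hP1 : wcomp (L.take j) = 1 := by
    rw [hiter n, hn, MonoidHom.one_comp]
  have hPj' : wcomp (L.take j') = 1 := by
    rw [← heq, hP1]
  calc wcomp L = wcomp (L.take j' ++ L.drop j') := by rw [List.take_append_drop]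
    _ = (wcomp (L.drop j')).comp (wcomp (L.take j')) := wcomp_append _ _
    _ = (wcomp (L.drop j')).comp 1 := by rw [hPj']
    _ = 1 := MonoidHom.comp_one _

end Words
section Main

variable {G : Type*} [Group G] [Finite G] {m : ℕ}
  (f : Fin m → ((↥(Subgroup.center G) →* ℂˣ) →* ↥(Subgroup.center G)))
  (g : Fin m → (G →* (G →* ℂˣ)))

/-- precomposition with an endomorphism, as a map on characters -/
def cm (c : ↥(Subgroup.center G) →* ↥(Subgroup.center G)) :
    (↥(Subgroup.center G) →* ℂˣ) →* (↥(Subgroup.center G) →* ℂˣ) :=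
  MonoidHom.mk' (fun χ => χ.comp c) (fun χ₁ χ₂ => MonoidHom.mul_comp χ₁ χ₂ c)

@[simp] lemma cm_apply (c : ↥(Subgroup.center G) →* ↥(Subgroup.center G))
    (χ : ↥(Subgroup.center G) →* ℂˣ) : cm c χ = χ.comp c := rfl

/-- `ρ ∘ g i` as a homomorphism `G →* Ẑ` -/
def res (i : Fin m) : G →* (↥(Subgroup.center G) →* ℂˣ) :=
  MonoidHom.mk' (fun x => (g i x).comp (Subgroup.center G).subtype)
    (fun x y => by rw [map_mul]; exact MonoidHom.mul_comp _ _ _)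

@[simp] lemma res_apply (i : Fin m) (x : G) :
    res g i x = (g i x).comp (Subgroup.center G).subtype := rfl

/-- The building block `x ↦ f i (ρ(g i x) ∘ a)`. -/
def Fi (i : Fin m) (a : ↥(Subgroup.center G) →* ↥(Subgroup.center G)) : G →* ↥(Subgroup.center G) :=
  ((f i).comp (cm a)).comp (res g i)

@[simp] lemma Fi_apply (i : Fin m) (a : ↥(Subgroup.center G) →* ↥(Subgroup.center G)) (x : G) :
    Fi f g i a x = f i ((res g i x).comp a) := rfl

lemma Fi_mul (i : Fin m) (a b : ↥(Subgroup.center G) →* ↥(Subgroup.center G)) :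
    Fi f g i (a * b) = Fi f g i a * Fi f g i b := by
  ext x
  rw [MonoidHom.mul_apply, Fi_apply, Fi_apply, Fi_apply, MonoidHom.comp_mul, map_mul]

/-- `Fi` as a homomorphism in `a`. -/
def FiM (i : Fin m) : (↥(Subgroup.center G) →* ↥(Subgroup.center G)) →* (G →* ↥(Subgroup.center G)) :=
  MonoidHom.mk' (Fi f g i) (Fi_mul f g i)

lemma ee_mul (z₁ z₂ : G →* ↥(Subgroup.center G)) : ee (z₁ * z₂) = ee z₁ * ee z₂ :=
  MonoidHom.mul_comp z₁ z₂ _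

/-- the difference transfer map `d ↦ Fi i (p ∘ (d∘ι) ∘ q)`, as a homomorphism in `d`. -/
def DifMap (i : Fin m) (p q : ↥(Subgroup.center G) →* ↥(Subgroup.center G)) :
    (G →* ↥(Subgroup.center G)) →* (G →* ↥(Subgroup.center G)) :=
  MonoidHom.mk' (fun d => Fi f g i (p.comp ((ee d).comp q)))
    (fun d₁ d₂ => by
      rw [ee_mul, MonoidHom.mul_comp, MonoidHom.comp_mul, Fi_mul])

@[simp] lemma DifMap_apply (i : Fin m) (p q : ↥(Subgroup.center G) →* ↥(Subgroup.center G))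
    (d : G →* ↥(Subgroup.center G)) :
    DifMap f g i p q d = Fi f g i (p.comp ((ee d).comp q)) := rfl

/-- generators of type A: `v ∘ (word of length k) ∘ u`. -/
def genA (k : ℕ) : Set (G →* ↥(Subgroup.center G)) :=
  { d | ∃ v : ↥(Subgroup.center G) →* ↥(Subgroup.center G), ∃ u : G →* ↥(Subgroup.center G),
      ∃ L : List (G →* ↥(Subgroup.center G)), L.length = k ∧
        d = v.comp ((wcomp L).comp u) }

/-- generators of type B: `φ ∘ C_{word of length k} ∘ η`. -/
def genB (k : ℕ) : Set (G →* ↥(Subgroup.center G)) :=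
  { d | ∃ φ : (↥(Subgroup.center G) →* ℂˣ) →* ↥(Subgroup.center G),
      ∃ η : G →* (↥(Subgroup.center G) →* ℂˣ),
      ∃ L : List (G →* ↥(Subgroup.center G)), L.length = k ∧
        d = φ.comp ((cm (wcomp L)).comp η) }

/-- the transpose of `η∘ι : Z(G) → Ẑ`. -/
def hatm (η : G →* (↥(Subgroup.center G) →* ℂˣ)) :
    ↥(Subgroup.center G) →* (↥(Subgroup.center G) →* ℂˣ) :=
  MonoidHom.mk'
    (fun v => MonoidHom.mk' (fun y => η ((Subgroup.center G).subtype y) v)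
      (fun y₁ y₂ => by rw [map_mul, map_mul]; rfl))
    (fun v₁ v₂ => MonoidHom.ext fun y => by
      show η ((Subgroup.center G).subtype y) (v₁ * v₂) = _
      rw [map_mul]
      rfl)

@[simp] lemma hatm_apply (η : G →* (↥(Subgroup.center G) →* ℂˣ))
    (v y : ↥(Subgroup.center G)) :
    hatm η v y = η ((Subgroup.center G).subtype y) v := rfl

lemma step_L1 (i : Fin m) (P Q : List (G →* ↥(Subgroup.center G))) {k : ℕ}
    {d : G →* ↥(Subgroup.center G)} (hd : d ∈ genA k) :
    DifMap f g i (wcomp P) (wcomp Q) d ∈ genB (k + 1) := by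
  obtain ⟨v, u, L, hL, rfl⟩ := hd
  refine ⟨(f i).comp (cm (wcomp Q)), (cm ((wcomp P).comp v)).comp (res g i),
    u :: L, by simp [hL], ?_⟩
  refine MonoidHom.ext fun x => rfl

lemma step_L2 (i : Fin m) (P Q : List (G →* ↥(Subgroup.center G))) {k : ℕ}
    {d : G →* ↥(Subgroup.center G)} (hd : d ∈ genB k) :
    DifMap f g i (wcomp P) (wcomp Q) d ∈ genA k := by
  obtain ⟨φ, η, L, hL, rfl⟩ := hd
  refine ⟨((f i).comp (cm (wcomp Q))).comp (hatm η),
    (vee φ).comp ((cm (wcomp P)).comp (res g i)), L, hL, ?_⟩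
  refine MonoidHom.ext fun x => ?_
  refine congrArg (f i) (MonoidHom.ext fun y => ?_)
  show ((res g i x).comp (wcomp P))
      (φ ((η ((Subgroup.center G).subtype ((wcomp Q) y))).comp (wcomp L))) = _
  rw [vee_spec]
  rfl

end Main


section Conv

variable {G : Type*} [Group G] [Finite G] {m : ℕ}
  (f : Fin m → ((↥(Subgroup.center G) →* ℂˣ) →* ↥(Subgroup.center G)))
  (g : Fin m → (G →* (G →* ℂˣ)))
  (w : G →* ↥(Subgroup.center G)) (t : ℕ)

def SA (k : ℕ) : Subgroup (G →* ↥(Subgroup.center G)) := Subgroup.closure (genA k)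
def SB (k : ℕ) : Subgroup (G →* ↥(Subgroup.center G)) := Subgroup.closure (genB k)

lemma mem_SB_step {k : ℕ} {d : G →* ↥(Subgroup.center G)} (hd : d ∈ SA k) (i : Fin m)
    (P Q : List (G →* ↥(Subgroup.center G))) :
    DifMap f g i (wcomp P) (wcomp Q) d ∈ SB (k + 1) := by
  have hle : (SA (G := G) k).map (DifMap f g i (wcomp P) (wcomp Q)) ≤ SB (k + 1) := by
    rw [SA, MonoidHom.map_closure]
    refine Subgroup.closure_le _ |>.mpr ?_
    rintro _ ⟨d', hd', rfl⟩
    exact Subgroup.subset_closure (step_L1 f g i P Q hd')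
  exact hle (Subgroup.mem_map_of_mem _ hd)

lemma mem_SA_step {k : ℕ} {d : G →* ↥(Subgroup.center G)} (hd : d ∈ SB k) (i : Fin m)
    (P Q : List (G →* ↥(Subgroup.center G))) :
    DifMap f g i (wcomp P) (wcomp Q) d ∈ SA k := by
  have hle : (SB (G := G) k).map (DifMap f g i (wcomp P) (wcomp Q)) ≤ SA k := by
    rw [SB, MonoidHom.map_closure]
    refine Subgroup.closure_le _ |>.mpr ?_
    rintro _ ⟨d', hd', rfl⟩
    exact Subgroup.subset_closure (step_L2 f g i P Q hd')
  exact hle (Subgroup.mem_map_of_mem _ hd)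

/-- left composition as a homomorphism for the pointwise group structure -/
def lcomp (v : ↥(Subgroup.center G) →* ↥(Subgroup.center G)) :
    (↥(Subgroup.center G) →* ↥(Subgroup.center G)) →* (↥(Subgroup.center G) →* ↥(Subgroup.center G)) :=
  MonoidHom.mk' (fun c => v.comp c) (fun a b => MonoidHom.comp_mul v a b)

lemma ee_div (z₁ z₂ : G →* ↥(Subgroup.center G)) : ee (z₁ / z₂) = ee z₁ / ee z₂ :=
  MonoidHom.div_comp z₁ z₂ _

lemma tele (z₁ z₂ : G →* ↥(Subgroup.center G)) (s : ℕ) :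
    wcomp (List.replicate s z₁) / wcomp (List.replicate s z₂)
      = ∏ j ∈ Finset.range s, (wcomp (List.replicate j z₂)).comp
          ((ee (z₁ / z₂)).comp (wcomp (List.replicate (s - 1 - j) z₁))) := by
  induction s with
  | zero => simp [List.replicate_zero, wcomp_nil]
  | succ s ih =>
    have h1 : wcomp (List.replicate (s+1) z₁) / wcomp (List.replicate (s+1) z₂)
        = ((ee z₁ / ee z₂).comp (wcomp (List.replicate s z₁)))
          * ((ee z₂).comp (wcomp (List.replicate s z₁) / wcomp (List.replicate s z₂))) := by
      rw [wcomp_replicate_succ' z₁ s, wcomp_replicate_succ' z₂ s]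
      refine MonoidHom.ext fun y => ?_
      simp only [MonoidHom.div_apply, MonoidHom.mul_apply, MonoidHom.comp_apply, map_div]
      rw [div_mul_div_cancel]
    rw [h1, ih]
    have h2 : (ee z₂).comp
        (∏ j ∈ Finset.range s, (wcomp (List.replicate j z₂)).comp
          ((ee (z₁ / z₂)).comp (wcomp (List.replicate (s - 1 - j) z₁))))
        = ∏ j ∈ Finset.range s, (wcomp (List.replicate (j+1) z₂)).comp
          ((ee (z₁ / z₂)).comp (wcomp (List.replicate (s - 1 - j) z₁))) := by
      have : ∀ c, (ee z₂).comp c = lcomp (ee z₂) c := fun c => rfl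
      rw [this, map_prod]
      refine Finset.prod_congr rfl fun j _ => ?_
      show (ee z₂).comp _ = _
      rw [← MonoidHom.comp_assoc, ← wcomp_replicate_succ']
    rw [h2, Finset.prod_range_succ']
    have h3 : ∀ j ∈ Finset.range s,
        (wcomp (List.replicate (j+1) z₂)).comp
          ((ee (z₁ / z₂)).comp (wcomp (List.replicate (s + 1 - 1 - (j+1)) z₁)))
        = (wcomp (List.replicate (j+1) z₂)).comp
          ((ee (z₁ / z₂)).comp (wcomp (List.replicate (s - 1 - j) z₁))) := by
      intro j _
      have hnat : s + 1 - 1 - (j + 1) = s - 1 - j := by omega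
      rw [hnat]
    rw [Finset.prod_congr rfl h3]
    have h4 : (wcomp (List.replicate 0 z₂)).comp
        ((ee (z₁ / z₂)).comp (wcomp (List.replicate (s + 1 - 1 - 0) z₁)))
        = (ee z₁ / ee z₂).comp (wcomp (List.replicate s z₁)) := by
      have hnat : s + 1 - 1 - 0 = s := by omega
      rw [hnat, List.replicate_zero, wcomp_nil, MonoidHom.id_comp, ee_div]
    rw [h4, mul_comm]

def Phi (z : G →* ↥(Subgroup.center G)) : G →* ↥(Subgroup.center G) :=
  w * ∏ s ∈ Finset.Icc 1 t, ∏ i : Fin m, Fi f g i (wcomp (List.replicate s z))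

lemma Phi_div (z₁ z₂ : G →* ↥(Subgroup.center G)) :
    Phi f g w t z₁ / Phi f g w t z₂
      = ∏ s ∈ Finset.Icc 1 t, ∏ i : Fin m, ∏ j ∈ Finset.range s,
          DifMap f g i (wcomp (List.replicate j z₂)) (wcomp (List.replicate (s - 1 - j) z₁))
            (z₁ / z₂) := by
  unfold Phi
  rw [mul_div_mul_left_eq_div, ← Finset.prod_div_distrib]
  refine Finset.prod_congr rfl fun s _ => ?_
  rw [← Finset.prod_div_distrib]
  refine Finset.prod_congr rfl fun i _ => ?_
  have h0 : Fi f g i (wcomp (List.replicate s z₁)) / Fi f g i (wcomp (List.replicate s z₂))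
      = FiM f g i (wcomp (List.replicate s z₁) / wcomp (List.replicate s z₂)) :=
    (map_div (FiM f g i) _ _).symm
  rw [h0, tele, map_prod]
  rfl

lemma Phi_div_mem_SB {k : ℕ} {z₁ z₂ : G →* ↥(Subgroup.center G)} (h : z₁ / z₂ ∈ SA k) :
    Phi f g w t z₁ / Phi f g w t z₂ ∈ SB (k + 1) := by
  rw [Phi_div]
  refine Subgroup.prod_mem _ fun s _ => Subgroup.prod_mem _ fun i _ =>
    Subgroup.prod_mem _ fun j _ => ?_
  exact mem_SB_step f g h i _ _

lemma Phi_div_mem_SA {k : ℕ} {z₁ z₂ : G →* ↥(Subgroup.center G)} (h : z₁ / z₂ ∈ SB k) :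
    Phi f g w t z₁ / Phi f g w t z₂ ∈ SA k := by
  rw [Phi_div]
  refine Subgroup.prod_mem _ fun s _ => Subgroup.prod_mem _ fun i _ =>
    Subgroup.prod_mem _ fun j _ => ?_
  exact mem_SA_step f g h i _ _

lemma key_mem : ∀ (k : ℕ) (z₁ z₂ : G →* ↥(Subgroup.center G)),
    (Phi f g w t)^[2*k+1] z₁ / (Phi f g w t)^[2*k+1] z₂ ∈ SB (k + 1) := by
  intro k
  induction k with
  | zero =>
    intro z₁ z₂
    have h0 : z₁ / z₂ ∈ SA (G := G) 0 :=
      Subgroup.subset_closure ⟨MonoidHom.id _, z₁ / z₂, [], rfl,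
        by rw [wcomp_nil, MonoidHom.id_comp, MonoidHom.id_comp]⟩
    simpa using Phi_div_mem_SB f g w t h0
  | succ k ih =>
    intro z₁ z₂
    have harith : 2*(k+1)+1 = (2*k+1) + 1 + 1 := by ring
    rw [harith, Function.iterate_succ_apply' _ ((2*k+1)+1),
      Function.iterate_succ_apply' _ ((2*k+1)+1),
      Function.iterate_succ_apply' _ (2*k+1), Function.iterate_succ_apply' _ (2*k+1)]
    exact Phi_div_mem_SB f g w t (Phi_div_mem_SA f g w t (ih z₁ z₂))

lemma SB_card_bot (hG : PurelyNonAbelian G) :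
    SB (G := G) (Nat.card (↥(Subgroup.center G) →* ↥(Subgroup.center G)) + 1) ≤ ⊥ := by
  rw [SB]
  refine Subgroup.closure_le _ |>.mpr ?_
  rintro _ ⟨φ, η, L, hL, rfl⟩
  have hw : wcomp L = 1 := long_words_trivial hG L (le_of_eq hL.symm)
  rw [SetLike.mem_coe, Subgroup.mem_bot]
  refine MonoidHom.ext fun x => ?_
  rw [hw]
  show φ ((η x).comp (1 : ↥(Subgroup.center G) →* ↥(Subgroup.center G))) = 1
  rw [MonoidHom.comp_one, map_one]

lemma Phi_const (hG : PurelyNonAbelian G) (z₁ z₂ : G →* ↥(Subgroup.center G)) :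
    (Phi f g w t)^[2 * Nat.card (↥(Subgroup.center G) →* ↥(Subgroup.center G)) + 1] z₁
      = (Phi f g w t)^[2 * Nat.card (↥(Subgroup.center G) →* ↥(Subgroup.center G)) + 1] z₂ := by
  have h := key_mem f g w t (Nat.card (↥(Subgroup.center G) →* ↥(Subgroup.center G))) z₁ z₂
  have hb := SB_card_bot hG h
  rw [Subgroup.mem_bot] at hb
  exact div_eq_one.mp hb

end Conv

end URecAux

/-- Let `G` be a finite purely non-abelian group.  Then for any `m, t ∈ ℕ`,
`w ∈ Hom(G, Z(G))`, homomorphisms `f i : Ẑ(G) → Z(G)` and bicharacters `g i : G → Ĝ`,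
there is a unique `z ∈ Hom(G, Z(G))` with
`z x = w x · ∏_{s=1}^{t} ∏_{i=1}^{m} f i (ζ_z^s (ρ (g i x)))`, where
`ζ_z(χ) = χ ∘ (z restricted to Z(G))` and `ρ` is restriction of characters to `Z(G)`. -/
theorem exists_unique_recursion (G : Type*) [Group G] [Finite G]
    (hG : PurelyNonAbelian G) (m t : ℕ)
    (w : G →* Subgroup.center G)
    (f : Fin m → ((Subgroup.center G →* ℂˣ) →* Subgroup.center G))
    (g : Fin m → (G →* (G →* ℂˣ))) :
    ∃! z : G →* Subgroup.center G, ∀ x : G,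
      z x = w x * ∏ s ∈ Finset.Icc 1 t, ∏ i : Fin m,
        f i ((fun χ : Subgroup.center G →* ℂˣ =>
            χ.comp (z.comp (Subgroup.center G).subtype))^[s]
          ((g i x).comp (Subgroup.center G).subtype)) := by
  classical
  have hiter : ∀ (z : G →* Subgroup.center G) (s : ℕ) (χ : Subgroup.center G →* ℂˣ),
      (fun χ : Subgroup.center G →* ℂˣ =>
        χ.comp (z.comp (Subgroup.center G).subtype))^[s] χ
        = χ.comp (URecAux.wcomp (List.replicate s z)) := by
    intro z s
    induction s with
    | zero =>
      intro χ
      rw [Function.iterate_zero_apply, List.replicate_zero, URecAux.wcomp_nil,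
        MonoidHom.comp_id]
    | succ s ih =>
      intro χ
      rw [Function.iterate_succ_apply, ih, MonoidHom.comp_assoc]
      have he : z.comp (Subgroup.center G).subtype = URecAux.ee z := rfl
      rw [he, ← URecAux.wcomp_replicate_succ']
  have hPhi : ∀ (z : G →* Subgroup.center G) (x : G),
      URecAux.Phi f g w t z x
        = w x * ∏ s ∈ Finset.Icc 1 t, ∏ i : Fin m,
            f i ((fun χ : Subgroup.center G →* ℂˣ =>
              χ.comp (z.comp (Subgroup.center G).subtype))^[s]
            ((g i x).comp (Subgroup.center G).subtype)) := by
    intro z x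
    rw [URecAux.Phi, MonoidHom.mul_apply, MonoidHom.finset_prod_apply]
    congr 1
    refine Finset.prod_congr rfl fun s _ => ?_
    rw [MonoidHom.finset_prod_apply]
    refine Finset.prod_congr rfl fun i _ => ?_
    rw [URecAux.Fi_apply, hiter]
    rfl
  set M := 2 * Nat.card (↥(Subgroup.center G) →* ↥(Subgroup.center G)) + 1 with hM
  set c := (URecAux.Phi f g w t)^[M] 1 with hc
  have hconst := URecAux.Phi_const f g w t hG
  have hfixc : URecAux.Phi f g w t c = c := by
    calc URecAux.Phi f g w t c = (URecAux.Phi f g w t)^[M+1] 1 :=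
          (Function.iterate_succ_apply' _ _ _).symm
      _ = (URecAux.Phi f g w t)^[M] (URecAux.Phi f g w t 1) :=
          Function.iterate_succ_apply _ _ _
      _ = (URecAux.Phi f g w t)^[M] 1 := hconst _ _
      _ = c := rfl
  refine ⟨c, ?_, ?_⟩
  · intro x
    conv_lhs => rw [← hfixc]
    exact hPhi c x
  · intro z hz
    have hfz : URecAux.Phi f g w t z = z := by
      refine MonoidHom.ext fun x => ?_
      rw [hPhi]
      exact (hz x).symm
    calc z = (URecAux.Phi f g w t)^[M] z := (Function.iterate_fixed hfz M).symm
      _ = (URecAux.Phi f g w t)^[M] 1 := hconst _ _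
      _ = c := rfl
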